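/- Let g be a finite-dimensional real Lie algebra and k ⊆ g an ideal with [k,k] = [g,g]. For x ∈ g let e_x := exp((ad x)|_k) ∈ GL(k) (well defined since ad x preserves the ideal k), and let Γ be the subgroup of GL(k*) generated by the maps μ ↦ μ ∘ e_x⁻¹ for x ∈ g. If ξ ∈ k* is such that the orbit Γξ is open in k*, then [k,k]^⊥ + Γξ = Γξ, where [k,k]^⊥ is the annihilator of [k,k] in k*. (This is the Lie-algebraic form of the paper's lemma: if H is a connected Lie group with a closed connected subgroup K satisfying [k,k] = [h,h], ξ ∈ k*, and the H-orbit Hξ ⊆ k* is open, then [k,k]^⊥ + Hξ = Hξ.) -/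

import Mathlib

open Pointwise

/-- The exponential of a linear endomorphism of a finite-dimensional real vector
space, computed via the matrix exponential in any basis. -/
noncomputable def expEnd {V : Type*} [AddCommGroup V] [Module ℝ V] [FiniteDimensional ℝ V]
    (f : Module.End ℝ V) : Module.End ℝ V :=
  Matrix.toLin (Module.finBasis ℝ V) (Module.finBasis ℝ V)
    (NormedSpace.exp (LinearMap.toMatrix (Module.finBasis ℝ V) (Module.finBasis ℝ V) f))

/-- The restriction `(ad x)|_k : k → k` of `ad x` to an ideal `k ⊆ g`. -/
def adRestrict {g : Type*} [LieRing g] [LieAlgebra ℝ g] (k : LieIdeal ℝ g) (x : g) :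
    Module.End ℝ ↥k.toSubmodule :=
  LinearMap.restrict (LieAlgebra.ad ℝ g x) (fun v hv => by
    rw [LieAlgebra.ad_apply]
    exact k.lie_mem hv)

/-- The subgroup `Γ` of `GL(k*)` generated by the maps `μ ↦ μ ∘ (e_x)⁻¹`, where
`e_x := exp ((ad x)|_k)` for `x ∈ g`; note `(e_x)⁻¹ = exp (-(ad x)|_k)`. -/
noncomputable def coadGamma {g : Type*} [LieRing g] [LieAlgebra ℝ g] [FiniteDimensional ℝ g]
    (k : LieIdeal ℝ g) :
    Subgroup (Module.Dual ℝ ↥k.toSubmodule ≃ₗ[ℝ] Module.Dual ℝ ↥k.toSubmodule) :=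
  Subgroup.closure {γ | ∃ x : g, ∀ μ : Module.Dual ℝ ↥k.toSubmodule,
    γ μ = μ ∘ₗ expEnd (-(adRestrict k x))}

section AuxForStatement4

open NormedSpace Nat

def matInto {V : Type*} [AddCommGroup V] [Module ℝ V] {n : ℕ}
    (b : Module.Basis (Fin n) ℝ V) (m' : Submodule ℝ V) :
    Submodule ℝ (Matrix (Fin n) (Fin n) ℝ) where
  carrier := {X | ∀ w : V, Matrix.toLin b b X w ∈ m'}
  add_mem' := by
    intro X Y hX hY w
    rw [map_add, LinearMap.add_apply]
    exact m'.add_mem (hX w) (hY w)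
  zero_mem' := by intro w; simp
  smul_mem' := by
    intro c X hX w
    rw [map_smul, LinearMap.smul_apply]
    exact m'.smul_mem c (hX w)

lemma expEnd_sub_id_mem {V : Type*} [AddCommGroup V] [Module ℝ V] [FiniteDimensional ℝ V]
    (m' : Submodule ℝ V) (f : Module.End ℝ V) (hf : ∀ v, f v ∈ m') (v : V) :
    expEnd f v - v ∈ m' := by
  classical
  letI : SeminormedRing (Matrix (Fin (Module.finrank ℝ V)) (Fin (Module.finrank ℝ V)) ℝ) :=
    Matrix.linftyOpSemiNormedRing
  letI : NormedRing (Matrix (Fin (Module.finrank ℝ V)) (Fin (Module.finrank ℝ V)) ℝ) :=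
    Matrix.linftyOpNormedRing
  letI : NormedAlgebra ℝ (Matrix (Fin (Module.finrank ℝ V)) (Fin (Module.finrank ℝ V)) ℝ) :=
    Matrix.linftyOpNormedAlgebra
  set b := Module.finBasis ℝ V with hb
  set M := LinearMap.toMatrix b b f with hMdef
  set q := matInto b m' with hqdef
  have hq : IsClosed (q : Set (Matrix (Fin (Module.finrank ℝ V)) (Fin (Module.finrank ℝ V)) ℝ)) :=
    q.closed_of_finiteDimensional
  have hMmem : M ∈ q := by
    intro w
    rw [hMdef, Matrix.toLin_toMatrix]
    exact hf w
  have hpow : ∀ i : ℕ, M ^ (i + 1) ∈ q := by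
    intro i w
    rw [show M ^ (i + 1) = M * M ^ i from pow_succ' M i, Matrix.toLin_mul b b b, LinearMap.comp_apply]
    exact hMmem _
  have hsum : HasSum (fun i : ℕ => ((i ! : ℝ))⁻¹ • M ^ i) (exp M) :=
    NormedSpace.exp_series_hasSum_exp' M
  have htend : Filter.Tendsto
      (fun N : ℕ => (∑ i ∈ Finset.range (N + 1), ((i ! : ℝ))⁻¹ • M ^ i) - 1)
      Filter.atTop (nhds (exp M - 1)) :=
    (hsum.tendsto_sum_nat.comp (Filter.tendsto_add_atTop_nat 1)).sub tendsto_const_nhds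
  have hmemseq : ∀ N : ℕ,
      (∑ i ∈ Finset.range (N + 1), ((i ! : ℝ))⁻¹ • M ^ i) - 1 ∈ q := by
    intro N
    have h : (∑ i ∈ Finset.range (N + 1), ((i ! : ℝ))⁻¹ • M ^ i)
        = (∑ i ∈ Finset.range N, (((i + 1)! : ℝ))⁻¹ • M ^ (i + 1)) + 1 := by
      rw [Finset.sum_range_succ']
      simp
    rw [h, add_sub_cancel_right]
    exact Submodule.sum_mem q fun i _ => q.smul_mem _ (hpow i)
  have hlim : exp M - 1 ∈ q :=
    hq.mem_of_tendsto htend (Filter.Eventually.of_forall hmemseq)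
  have h2 : Matrix.toLin b b (exp M) v - v = Matrix.toLin b b (exp M - 1) v := by
    rw [map_sub, LinearMap.sub_apply, Matrix.toLin_one, LinearMap.id_apply]
  show Matrix.toLin b b (exp M) v - v ∈ m'
  rw [h2]
  exact hlim v

lemma gamma_fix {g : Type*} [LieRing g] [LieAlgebra ℝ g] [FiniteDimensional ℝ g]
    (k : LieIdeal ℝ g)
    (hkk : (⁅k, k⁆ : LieIdeal ℝ g) = ⁅(⊤ : LieIdeal ℝ g), (⊤ : LieIdeal ℝ g)⁆)
    {γ : Module.Dual ℝ ↥k.toSubmodule ≃ₗ[ℝ] Module.Dual ℝ ↥k.toSubmodule}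
    (hγ : γ ∈ coadGamma k) {α : Module.Dual ℝ ↥k.toSubmodule}
    (hα : α ∈ Submodule.dualAnnihilator
      (Submodule.comap k.toSubmodule.subtype (⁅k, k⁆ : LieIdeal ℝ g).toSubmodule)) :
    γ α = α := by
  set m := Submodule.comap k.toSubmodule.subtype (⁅k, k⁆ : LieIdeal ℝ g).toSubmodule with hm
  refine Subgroup.closure_induction
    (p := fun γ' _ => γ' α = α) ?_ ?_ ?_ ?_ hγ
  · rintro γ' ⟨x, hx⟩
    rw [hx α]
    ext v
    have hmap : ∀ w : ↥k.toSubmodule, (-(adRestrict k x)) w ∈ m := by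
      intro w
      rw [LinearMap.neg_apply]
      refine m.neg_mem ?_
      rw [hm, Submodule.mem_comap]
      have hco : (k.toSubmodule.subtype) (adRestrict k x w) = ⁅x, (w : g)⁆ := rfl
      rw [hco]
      have : ⁅x, (w : g)⁆ ∈ (⁅k, k⁆ : LieIdeal ℝ g) := by
        rw [hkk]
        exact LieSubmodule.lie_mem_lie (LieSubmodule.mem_top x) (LieSubmodule.mem_top (w : g))
      exact this
    have hsub := expEnd_sub_id_mem m (-(adRestrict k x)) hmap v
    have h0 : α (expEnd (-(adRestrict k x)) v - v) = 0 :=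
      ((Submodule.mem_dualAnnihilator α).mp hα) _ hsub
    rw [map_sub, sub_eq_zero] at h0
    simpa using h0
  · rfl
  · intro γ₁ γ₂ _ _ ih1 ih2
    show γ₁ (γ₂ α) = α
    rw [ih2, ih1]
  · intro γ₁ _ ih
    conv_lhs => rw [← ih]
    exact γ₁.symm_apply_apply α

end AuxForStatement4


/-- If `k ⊆ g` is an ideal with `[k,k] = [g,g]` and the `Γ`-orbit of `ξ ∈ k*` is open in
`k*`, then `[k,k]^⊥ + Γξ = Γξ`, where `[k,k]^⊥` is the annihilator of `[k,k]` in `k*`.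
(The dual `k*` carries its standard topology: any Hausdorff vector topology, which is
unique since `k*` is finite-dimensional.) -/
theorem statement4 {g : Type*} [LieRing g] [LieAlgebra ℝ g] [FiniteDimensional ℝ g]
    (k : LieIdeal ℝ g)
    [TopologicalSpace (Module.Dual ℝ ↥k.toSubmodule)]
    [IsTopologicalAddGroup (Module.Dual ℝ ↥k.toSubmodule)]
    [ContinuousSMul ℝ (Module.Dual ℝ ↥k.toSubmodule)]
    [T2Space (Module.Dual ℝ ↥k.toSubmodule)]
    (hkk : (⁅k, k⁆ : LieIdeal ℝ g) = ⁅(⊤ : LieIdeal ℝ g), (⊤ : LieIdeal ℝ g)⁆)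
    (ξ : Module.Dual ℝ ↥k.toSubmodule)
    (hopen : IsOpen {η | ∃ γ ∈ coadGamma k, η = γ ξ}) :
    (↑(Submodule.dualAnnihilator
        (Submodule.comap k.toSubmodule.subtype (⁅k, k⁆ : LieIdeal ℝ g).toSubmodule)) : Set _)
        + {η | ∃ γ ∈ coadGamma k, η = γ ξ}
      = {η | ∃ γ ∈ coadGamma k, η = γ ξ} := by
  classical
  set m := Submodule.comap k.toSubmodule.subtype (⁅k, k⁆ : LieIdeal ℝ g).toSubmodule with hm
  set O := {η | ∃ γ ∈ coadGamma k, η = γ ξ} with hO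
  have hξO : ξ ∈ O := ⟨1, one_mem _, rfl⟩
  have hfix : ∀ γ ∈ coadGamma k, ∀ α ∈ Submodule.dualAnnihilator m, γ α = α :=
    fun γ hγ α hα => gamma_fix k hkk hγ hα
  have key : ∀ α ∈ Submodule.dualAnnihilator m, ξ + α ∈ O := by
    intro α hα
    set S := {t : ℝ | ξ + t • α ∈ O} with hS
    have hcont : Continuous fun t : ℝ => ξ + t • α :=
      continuous_const.add (continuous_id.smul continuous_const)
    have hSopen : IsOpen S := hopen.preimage hcont
    have hSclosed : IsClosed S := by
      refine isClosed_of_closure_subset ?_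
      intro t₀ ht₀
      have hU : IsOpen ((fun η => η + t₀ • α) '' O) :=
        (isOpenMap_add_right (t₀ • α)) O hopen
      have hV : IsOpen {t : ℝ | ξ + t • α ∈ (fun η => η + t₀ • α) '' O} :=
        hU.preimage hcont
      have ht₀V : t₀ ∈ {t : ℝ | ξ + t • α ∈ (fun η => η + t₀ • α) '' O} :=
        ⟨ξ, hξO, rfl⟩
      obtain ⟨t, htV, htS⟩ := mem_closure_iff.mp ht₀ _ hV ht₀V
      obtain ⟨γ, hγ, hγeq⟩ := htS
      obtain ⟨η, hηO, heq⟩ := htV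
      obtain ⟨γ', hγ', hγ'eq⟩ := hηO
      -- heq : η + t₀ • α = ξ + t • α ; hγ'eq : η = γ' ξ ; hγeq : ξ + t • α = γ ξ
      refine ⟨γ'⁻¹ * γ, mul_mem (inv_mem hγ') hγ, ?_⟩
      have heq' : η + t₀ • α = ξ + t • α := heq
      have h1 : γ' ξ + t₀ • α = γ ξ := by rw [← hγ'eq, heq']; exact hγeq
      have h2 : γ'⁻¹ (γ ξ) = ξ + t₀ • α := by
        rw [← h1, map_add, hfix γ'⁻¹ (inv_mem hγ') _ (Submodule.smul_mem _ t₀ hα)]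
        congr 1
        exact γ'.symm_apply_apply ξ
      show ξ + t₀ • α = γ'⁻¹ (γ ξ)
      exact h2.symm
    have h0S : (0 : ℝ) ∈ S := by
      show ξ + (0 : ℝ) • α ∈ O
      simpa using hξO
    have hSuniv : S = Set.univ := (IsClopen.eq_univ ⟨hSclosed, hSopen⟩) ⟨0, h0S⟩
    have h1 : (1 : ℝ) ∈ S := hSuniv ▸ Set.mem_univ 1
    have : ξ + (1 : ℝ) • α ∈ O := h1
    simpa using this
  apply Set.Subset.antisymm
  · intro η hη
    rw [Set.mem_add] at hη
    obtain ⟨a, ha, bb, hb, rfl⟩ := hη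
    obtain ⟨γ, hγ, rfl⟩ := hb
    obtain ⟨δ, hδ, hδeq⟩ := key a ha
    refine ⟨γ * δ, mul_mem hγ hδ, ?_⟩
    show a + γ ξ = γ (δ ξ)
    rw [← hδeq, map_add, hfix γ hγ a ha, add_comm]
  · intro η hη
    exact Set.mem_add.mpr ⟨0, Submodule.zero_mem _, η, hη, zero_add η⟩
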